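/- Let I be a linear order, m ≥ 1 an integer, and i_1 >_I i_2 >_I … >_I i_m elements of I (a strictly I-decreasing sequence). Then ‖∑_{l=1}^{m} (1/(l+1))·x_{i_l}‖_F < 4. -/

import Mathlib

/-- For a strictly increasing finite sequence `t : Fin n → I`, the functional
`f_t(∑ a_i x_i) = ∑_{l<n} a_{t l}/ln(l+2)` on `B_I = (I →₀ ℚ)`. -/
noncomputable def seqFunctional {I : Type*} [LinearOrder I] {n : ℕ}
    (t : Fin n → I) (x : I →₀ ℚ) : ℝ :=
  ∑ l : Fin n, (x (t l) : ℝ) / Real.log ((l : ℕ) + 2)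

/-- The set of values `|f(x)|` for `f ∈ F`, i.e. over all strictly increasing
finite sequences of elements of `I`. -/
def normValueSet {I : Type*} [LinearOrder I] (x : I →₀ ℚ) : Set ℝ :=
  {r : ℝ | ∃ (n : ℕ) (t : Fin n → I), StrictMono t ∧ r = |seqFunctional t x|}

/-- The norm `‖x‖_F = sup {|f(x)| : f ∈ F}` on `B_I`. -/
noncomputable def Fnorm {I : Type*} [LinearOrder I] (x : I →₀ ℚ) : ℝ :=
  sSup (normValueSet x)

private lemma sum_inv_le_log (N : ℕ) :
    ∑ l ∈ Finset.Icc 1 N, (1:ℝ)/((l:ℝ)+1) ≤ Real.log ((N:ℝ)+1) := by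
  induction N with
  | zero => simp
  | succ N ih =>
    rw [Finset.sum_Icc_succ_top (by omega : 1 ≤ N + 1)]
    have key : (1:ℝ)/((N:ℝ)+2) ≤ Real.log ((N:ℝ)+2) - Real.log ((N:ℝ)+1) := by
      rw [← Real.log_div (by positivity) (by positivity)]
      have h := Real.one_sub_inv_le_log_of_pos
        (show (0:ℝ) < ((N:ℝ)+2)/((N:ℝ)+1) by positivity)
      have h2 : (((N:ℝ)+2)/((N:ℝ)+1))⁻¹ = ((N:ℝ)+1)/((N:ℝ)+2) := by
        rw [inv_div]
      rw [h2] at h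
      have h3 : 1 - ((N:ℝ)+1)/((N:ℝ)+2) = 1/((N:ℝ)+2) := by
        field_simp
        norm_num
      linarith
    push_cast
    have hrw : ((N:ℝ) + 1 + 1) = (N:ℝ) + 2 := by ring
    rw [hrw]
    linarith

/-- Core combinatorial bound: if `P` is a finite set of pairs `(k,l)` with `l ≥ 1`,
both coordinates injective and the correspondence antitone, then
`∑ 1/((l+1)·log(k+2)) ≤ 1 + 2/log 2`. -/
private lemma pair_sum_bound {n : ℕ} (P : Finset (Fin n × ℕ))
    (hge : ∀ p ∈ P, 1 ≤ p.2)
    (hinj1 : ∀ p ∈ P, ∀ q ∈ P, p.1 = q.1 → p = q)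
    (hinj2 : ∀ p ∈ P, ∀ q ∈ P, p.2 = q.2 → p = q)
    (hanti : ∀ p ∈ P, ∀ q ∈ P, p.1 < q.1 → q.2 < p.2) :
    ∑ p ∈ P, (1:ℝ)/(((p.2:ℝ)+1) * Real.log (((p.1:ℕ):ℝ)+2)) ≤ 1 + 2 / Real.log 2 := by
  classical
  set r : ℕ := P.card with hrdef
  have hlog2pos : (0:ℝ) < Real.log 2 := Real.log_pos (by norm_num)
  have hlogk : ∀ k : Fin n, 0 < Real.log (((k:ℕ):ℝ)+2) := by
    intro k
    refine Real.log_pos ?_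
    have : (0:ℝ) ≤ ((k:ℕ):ℝ) := Nat.cast_nonneg _
    linarith
  -- rank lemma : r ≤ k + l for every pair (k,l) ∈ P
  have hrank : ∀ p ∈ P, r ≤ (p.1:ℕ) + p.2 := by
    intro p hp
    have hAcard : (P.filter (fun q => q.1 < p.1)).card ≤ (p.1:ℕ) := by
      have h := Finset.card_le_card_of_injOn (fun q : Fin n × ℕ => (q.1:ℕ))
        (t := Finset.range (p.1:ℕ))
        (fun q hq => by
          rw [Finset.mem_coe, Finset.mem_range]
          exact_mod_cast (Finset.mem_filter.mp hq).2)
        (fun q hq q' hq' h => hinj1 q (Finset.mem_filter.mp hq).1 q'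
          (Finset.mem_filter.mp hq').1 (Fin.ext h))
      simpa using h
    have hBcard : (P.filter (fun q => p.1 < q.1)).card ≤ p.2 - 1 := by
      have h := Finset.card_le_card_of_injOn (fun q : Fin n × ℕ => q.2)
        (t := Finset.Ico 1 p.2)
        (fun q hq => by
          have h1 := hanti p hp q (Finset.mem_filter.mp hq).1 (Finset.mem_filter.mp hq).2
          have h2 := hge q (Finset.mem_filter.mp hq).1
          rw [Finset.mem_coe, Finset.mem_Ico]
          exact ⟨h2, h1⟩)
        (fun q hq q' hq' h => hinj2 q (Finset.mem_filter.mp hq).1 q'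
          (Finset.mem_filter.mp hq').1 h)
      rw [Nat.card_Ico] at h
      exact h
    have hsplit : P.filter (fun q => ¬ q.1 < p.1) = insert p (P.filter (fun q => p.1 < q.1)) := by
      ext q
      simp only [Finset.mem_filter, Finset.mem_insert]
      constructor
      · rintro ⟨hqP, hnot⟩
        rcases eq_or_lt_of_le (le_of_not_gt hnot : p.1 ≤ q.1) with h|h
        · exact Or.inl (hinj1 q hqP p hp h.symm)
        · exact Or.inr ⟨hqP, h⟩
      · intro hq
        rcases hq with h | ⟨hqP, h⟩
        · subst h; exact ⟨hp, lt_irrefl _⟩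
        · exact ⟨hqP, asymm h⟩
    have hcards : (P.filter (fun q => q.1 < p.1)).card
        + (insert p (P.filter (fun q => p.1 < q.1))).card = r := by
      rw [← hsplit, hrdef]
      exact Finset.card_filter_add_card_filter_not
        (s := P) (p := fun q : Fin n × ℕ => q.1 < p.1)
    have hpB : p ∉ P.filter (fun q => p.1 < q.1) := by
      simp [Finset.mem_filter]
    rw [Finset.card_insert_of_notMem hpB] at hcards
    have hp2 : 1 ≤ p.2 := hge p hp
    omega
  -- split the sum according to whether 2*l ≤ r
  rw [← Finset.sum_filter_add_sum_filter_not P (fun p => 2*p.2 ≤ r)]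
  have hP1 : ∑ p ∈ P.filter (fun p => 2*p.2 ≤ r),
      (1:ℝ)/(((p.2:ℝ)+1) * Real.log (((p.1:ℕ):ℝ)+2)) ≤ 1 := by
    by_cases hr2 : 2 ≤ r
    · have hLpos : 0 < Real.log (((r:ℝ)+2)/2) := by
        refine Real.log_pos ?_
        have : (2:ℝ) ≤ (r:ℝ) := by exact_mod_cast hr2
        linarith
      have hterm : ∀ p ∈ P.filter (fun p => 2*p.2 ≤ r),
          (1:ℝ)/(((p.2:ℝ)+1) * Real.log (((p.1:ℕ):ℝ)+2))
            ≤ (1/((p.2:ℝ)+1)) * (1/Real.log (((r:ℝ)+2)/2)) := by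
        intro p hp'
        obtain ⟨hpP, hsmall⟩ := Finset.mem_filter.mp hp'
        have h1 : r ≤ (p.1:ℕ) + p.2 := hrank p hpP
        have h2 : r ≤ 2*((p.1:ℕ)) + 2 := by omega
        have hk : ((r:ℝ)+2)/2 ≤ ((p.1:ℕ):ℝ)+2 := by
          have : (r:ℝ) ≤ 2*((p.1:ℕ):ℝ) + 2 := by exact_mod_cast h2
          linarith
        have hlog : Real.log (((r:ℝ)+2)/2) ≤ Real.log (((p.1:ℕ):ℝ)+2) :=
          Real.log_le_log (by positivity) hk
        rw [one_div_mul_one_div]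
        have hl1 : (0:ℝ) < (p.2:ℝ)+1 := by positivity
        gcongr
      calc ∑ p ∈ P.filter (fun p => 2*p.2 ≤ r),
            (1:ℝ)/(((p.2:ℝ)+1) * Real.log (((p.1:ℕ):ℝ)+2))
          ≤ ∑ p ∈ P.filter (fun p => 2*p.2 ≤ r),
            (1/((p.2:ℝ)+1)) * (1/Real.log (((r:ℝ)+2)/2)) := Finset.sum_le_sum hterm
        _ = (∑ p ∈ P.filter (fun p => 2*p.2 ≤ r), 1/((p.2:ℝ)+1))
              * (1/Real.log (((r:ℝ)+2)/2)) := by rw [Finset.sum_mul]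
        _ ≤ Real.log (((r:ℝ)+2)/2) * (1/Real.log (((r:ℝ)+2)/2)) := by
            refine mul_le_mul_of_nonneg_right ?_ (by positivity)
            have himg : ∑ p ∈ P.filter (fun p => 2*p.2 ≤ r), (1:ℝ)/((p.2:ℝ)+1)
                = ∑ l ∈ (P.filter (fun p => 2*p.2 ≤ r)).image Prod.snd, (1:ℝ)/((l:ℝ)+1) := by
              rw [Finset.sum_image]
              intro q hq q' hq' h
              exact hinj2 q (Finset.mem_filter.mp hq).1 q' (Finset.mem_filter.mp hq').1 h
            rw [himg]
            have hsub : (P.filter (fun p => 2*p.2 ≤ r)).image Prod.snd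
                ⊆ Finset.Icc 1 (r/2) := by
              intro l hl
              obtain ⟨p, hp', rfl⟩ := Finset.mem_image.mp hl
              obtain ⟨hpP, hsmall⟩ := Finset.mem_filter.mp hp'
              have h1 := hge p hpP
              rw [Finset.mem_Icc]
              omega
            calc ∑ l ∈ (P.filter (fun p => 2*p.2 ≤ r)).image Prod.snd, (1:ℝ)/((l:ℝ)+1)
                ≤ ∑ l ∈ Finset.Icc 1 (r/2), (1:ℝ)/((l:ℝ)+1) := by
                  refine Finset.sum_le_sum_of_subset_of_nonneg hsub ?_
                  intro l _ _
                  positivity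
              _ ≤ Real.log (((r/2 : ℕ):ℝ)+1) := sum_inv_le_log (r/2)
              _ ≤ Real.log (((r:ℝ)+2)/2) := by
                  refine Real.log_le_log (by positivity) ?_
                  have h1 : ((r/2 : ℕ):ℝ) ≤ (r:ℝ)/2 := by
                    have := Nat.cast_div_le (m := r) (n := 2) (α := ℝ)
                    simpa using this
                  linarith
        _ = 1 := by field_simp
    · have hempty : P.filter (fun p => 2*p.2 ≤ r) = ∅ := by
        refine Finset.filter_eq_empty_iff.mpr ?_
        intro p hp
        have h1 := hge p hp
        omega
      rw [hempty]
      simp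
  have hP2 : ∑ p ∈ P.filter (fun p => ¬ 2*p.2 ≤ r),
      (1:ℝ)/(((p.2:ℝ)+1) * Real.log (((p.1:ℕ):ℝ)+2)) ≤ 2 / Real.log 2 := by
    have hterm : ∀ p ∈ P.filter (fun p => ¬ 2*p.2 ≤ r),
        (1:ℝ)/(((p.2:ℝ)+1) * Real.log (((p.1:ℕ):ℝ)+2))
          ≤ 2/(((r:ℝ)+3) * Real.log 2) := by
      intro p hp'
      obtain ⟨hpP, hbig⟩ := Finset.mem_filter.mp hp'
      have h1 : r + 3 ≤ 2*(p.2 + 1) := by omega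
      have h1' : (r:ℝ) + 3 ≤ 2*((p.2:ℝ)+1) := by exact_mod_cast h1
      have hlog : Real.log 2 ≤ Real.log (((p.1:ℕ):ℝ)+2) := by
        refine Real.log_le_log (by norm_num) ?_
        have : (0:ℝ) ≤ ((p.1:ℕ):ℝ) := Nat.cast_nonneg _
        linarith
      have hlk := hlogk p.1
      have hp21 : (0:ℝ) < (p.2:ℝ)+1 := by positivity
      rw [div_le_div_iff₀ (by positivity) (by positivity)]
      nlinarith
    calc ∑ p ∈ P.filter (fun p => ¬ 2*p.2 ≤ r),
          (1:ℝ)/(((p.2:ℝ)+1) * Real.log (((p.1:ℕ):ℝ)+2))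
        ≤ ((P.filter (fun p => ¬ 2*p.2 ≤ r)).card : ℝ)
            * (2/(((r:ℝ)+3) * Real.log 2)) := by
          have h := Finset.sum_le_card_nsmul (P.filter (fun p => ¬ 2*p.2 ≤ r)) _
            (2/(((r:ℝ)+3) * Real.log 2)) hterm
          simpa [nsmul_eq_mul] using h
      _ ≤ ((r:ℝ)+3) * (2/(((r:ℝ)+3) * Real.log 2)) := by
          refine mul_le_mul_of_nonneg_right ?_ (by positivity)
          have hcard : (P.filter (fun p => ¬ 2*p.2 ≤ r)).card ≤ r :=
            Finset.card_le_card (Finset.filter_subset _ _)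
          have h2 : ((P.filter (fun p => ¬ 2*p.2 ≤ r)).card : ℝ) ≤ (r:ℝ) := by
            exact_mod_cast hcard
          linarith
      _ = 2 / Real.log 2 := by
          field_simp
  linarith

private lemma abs_seqFunctional_le {I : Type*} [LinearOrder I] (m : ℕ)
    (v : ℕ → I) (hv : StrictAntiOn v (Set.Icc 1 m))
    {n : ℕ} (t : Fin n → I) (ht : StrictMono t) :
    |seqFunctional t (∑ l ∈ Finset.Icc 1 m, Finsupp.single (v l) ((1 : ℚ) / ((l : ℚ) + 1)))|
      ≤ 1 + 2 / Real.log 2 := by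
  classical
  set x : I →₀ ℚ := ∑ l ∈ Finset.Icc 1 m, Finsupp.single (v l) ((1 : ℚ) / ((l : ℚ) + 1))
    with hxdef
  set P : Finset (Fin n × ℕ) :=
    (Finset.univ ×ˢ Finset.Icc 1 m).filter (fun p => v p.2 = t p.1) with hPdef
  have hmemP : ∀ p : Fin n × ℕ, p ∈ P ↔ (1 ≤ p.2 ∧ p.2 ≤ m) ∧ v p.2 = t p.1 := by
    intro p
    simp [hPdef, Finset.mem_filter, Finset.mem_product, Finset.mem_Icc]
  have hlogk : ∀ k : Fin n, 0 < Real.log (((k:ℕ):ℝ)+2) := by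
    intro k
    refine Real.log_pos ?_
    have : (0:ℝ) ≤ ((k:ℕ):ℝ) := Nat.cast_nonneg _
    linarith
  have hxi : ∀ i : I, (x i : ℝ)
      = ∑ l ∈ Finset.Icc 1 m, (if v l = i then (1:ℝ)/((l:ℝ)+1) else 0) := by
    intro i
    rw [hxdef, Finsupp.finset_sum_apply]
    push_cast
    refine Finset.sum_congr rfl (fun l _ => ?_)
    rw [Finsupp.single_apply]
    split <;> norm_num
  have hstep1 : seqFunctional t x
      = ∑ p ∈ P, (1:ℝ)/(((p.2:ℝ)+1) * Real.log (((p.1:ℕ):ℝ)+2)) := by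
    have h1 : seqFunctional t x
        = ∑ k : Fin n, ∑ l ∈ Finset.Icc 1 m,
            (if v l = t k then (1:ℝ)/(((l:ℝ)+1) * Real.log (((k:ℕ):ℝ)+2)) else 0) := by
      unfold seqFunctional
      refine Finset.sum_congr rfl (fun k _ => ?_)
      rw [hxi, Finset.sum_div]
      refine Finset.sum_congr rfl (fun l _ => ?_)
      split
      · rw [div_div]
      · simp
    have h2 : (∑ p ∈ Finset.univ ×ˢ Finset.Icc 1 m,
          (if v p.2 = t p.1 then (1:ℝ)/(((p.2:ℝ)+1) * Real.log (((p.1:ℕ):ℝ)+2)) else 0))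
        = ∑ k : Fin n, ∑ l ∈ Finset.Icc 1 m,
            (if v l = t k then (1:ℝ)/(((l:ℝ)+1) * Real.log (((k:ℕ):ℝ)+2)) else 0) :=
      Finset.sum_product _ _ _
    rw [hPdef, Finset.sum_filter]
    exact h1.trans h2.symm
  have hg_nonneg : ∀ p : Fin n × ℕ,
      0 ≤ (1:ℝ)/(((p.2:ℝ)+1) * Real.log (((p.1:ℕ):ℝ)+2)) := by
    intro p
    have h1 := hlogk p.1
    positivity
  rw [hstep1, abs_of_nonneg (Finset.sum_nonneg fun p _ => hg_nonneg p)]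
  -- verify hypotheses of the combinatorial lemma
  have hge : ∀ p ∈ P, 1 ≤ p.2 := fun p hp => ((hmemP p).mp hp).1.1
  have hinj1 : ∀ p ∈ P, ∀ q ∈ P, p.1 = q.1 → p = q := by
    intro p hp q hq h1
    rw [hmemP] at hp hq
    have h2 : v p.2 = v q.2 := by rw [hp.2, hq.2, h1]
    have h3 : p.2 = q.2 := hv.injOn (Set.mem_Icc.mpr hp.1) (Set.mem_Icc.mpr hq.1) h2
    exact Prod.ext h1 h3
  have hanti : ∀ p ∈ P, ∀ q ∈ P, p.1 < q.1 → q.2 < p.2 := by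
    intro p hp q hq hlt
    rw [hmemP] at hp hq
    have h2 : v p.2 < v q.2 := by rw [hp.2, hq.2]; exact ht hlt
    by_contra hle
    push_neg at hle
    rcases lt_or_eq_of_le hle with h | h
    · exact absurd h2 (lt_asymm (hv (Set.mem_Icc.mpr hp.1) (Set.mem_Icc.mpr hq.1) h))
    · rw [h] at h2; exact lt_irrefl _ h2
  have hinj2 : ∀ p ∈ P, ∀ q ∈ P, p.2 = q.2 → p = q := by
    intro p hp q hq h2
    rcases lt_trichotomy p.1 q.1 with h|h|h
    · exact absurd (hanti p hp q hq h) (by omega)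
    · exact Prod.ext h h2
    · exact absurd (hanti q hq p hp h) (by omega)
  exact pair_sum_bound P hge hinj1 hinj2 hanti

/-- If `i_1 >_I i_2 >_I ⋯ >_I i_m` (a strictly decreasing sequence), then
`‖∑_{l=1}^m (1/(l+1))·x_{i_l}‖_F < 4`. -/
theorem Fnorm_decreasing_lt_four {I : Type*} [LinearOrder I] (m : ℕ) (hm : 1 ≤ m)
    (v : ℕ → I) (hv : StrictAntiOn v (Set.Icc 1 m)) :
    Fnorm (∑ l ∈ Finset.Icc 1 m, Finsupp.single (v l) ((1 : ℚ) / ((l : ℚ) + 1))) < 4 := by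
  have hlog2 : (0.6931471803 : ℝ) < Real.log 2 := Real.log_two_gt_d9
  have hbound : (1 : ℝ) + 2 / Real.log 2 < 4 := by
    have h2 : 2 / Real.log 2 < 3 := by
      rw [div_lt_iff₀ (by linarith)]
      nlinarith
    linarith
  refine lt_of_le_of_lt (Real.sSup_le ?_ (by positivity)) hbound
  rintro y ⟨n, t, htmono, rfl⟩
  exact abs_seqFunctional_le m v hv t htmono
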